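/- Let A = KQ/I be a special multiserial algebra, Q* the quiver obtained from Q by adding for each (σ,τ)-maximal path M an arrow a_M from t(M) to s(M), and let 𝒮 = 𝒞 ∪ ℳ*, where 𝒞 is the set of cycles C_a (for arrows a with m̂_a existing) and ℳ* is the set of all cyclic permutations of the cycles M a_M. Let μ be constant equal to N on 𝒮, where N ≥ 2 is minimal such that all paths of length ≥ N in KQ lie in I. Then (𝒮, μ) is a defining pair in Q*. -/

import Mathlib

/-!  A model of the path algebra `KQ` of a finite quiver `Q` (vertex set `V`,
arrow set `A`, source and target maps `s t : A → V`), as the quotient of the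
free algebra on `V ⊕ A` by the usual path-algebra relations.  -/

open FreeAlgebra

inductive PathRel (K V A : Type) [Field K] [Fintype V] [DecidableEq V] (s t : A → V) :
    FreeAlgebra K (V ⊕ A) → FreeAlgebra K (V ⊕ A) → Prop
  | vtxMul : ∀ v w : V,
      PathRel K V A s t (ι K (Sum.inl v) * ι K (Sum.inl w))
        (if v = w then ι K (Sum.inl v) else 0)
  | unit : PathRel K V A s t (∑ v : V, ι K (Sum.inl v)) 1
  | src : ∀ a : A,
      PathRel K V A s t (ι K (Sum.inl (s a)) * ι K (Sum.inr a)) (ι K (Sum.inr a))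
  | tgt : ∀ a : A,
      PathRel K V A s t (ι K (Sum.inr a) * ι K (Sum.inl (t a))) (ι K (Sum.inr a))

/-- The path algebra `KQ`. -/
abbrev PathAlg (K V A : Type) [Field K] [Fintype V] [DecidableEq V] (s t : A → V) : Type :=
  RingQuot (PathRel K V A s t)

section

variable (K V A : Type) [Field K] [Fintype V] [DecidableEq V] (s t : A → V)

/-- The element of `KQ` corresponding to an arrow. -/
noncomputable def arrow (a : A) : PathAlg K V A s t :=
  RingQuot.mkAlgHom K (PathRel K V A s t) (ι K (Sum.inr a))

/-- The idempotent of `KQ` corresponding to a vertex (trivial path). -/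
noncomputable def vtx (v : V) : PathAlg K V A s t :=
  RingQuot.mkAlgHom K (PathRel K V A s t) (ι K (Sum.inl v))

/-- The element of `KQ` given by a path, recorded as its list of arrows. -/
noncomputable def pathElem (l : List A) : PathAlg K V A s t :=
  (l.map (arrow K V A s t)).prod

/-- The ideal `J²`, where `J` is the arrow ideal: it is generated by the
products of two arrows (equivalently, by the paths of length 2). -/
def JSqIdeal : TwoSidedIdeal (PathAlg K V A s t) :=
  TwoSidedIdeal.span {x | ∃ a b : A, x = arrow K V A s t a * arrow K V A s t b}

/-- An ideal `I` of `KQ` is admissible if `J^N ⊆ I ⊆ J²` for some `N ≥ 2`;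
`J^N ⊆ I` amounts to all paths of length `N` lying in `I`. -/
def Admissible (I : TwoSidedIdeal (PathAlg K V A s t)) : Prop :=
  ∃ N : ℕ, 2 ≤ N ∧ (∀ l : List A, l.length = N → pathElem K V A s t l ∈ I) ∧
    I ≤ JSqIdeal K V A s t

/-- Condition (M): for every arrow `a` there is at most one arrow `b` with
`ab ∉ I` and at most one arrow `c` with `ca ∉ I`. -/
def ConditionM (I : TwoSidedIdeal (PathAlg K V A s t)) : Prop :=
  ∀ a : A,
    (∀ b b' : A, arrow K V A s t a * arrow K V A s t b ∉ I →
      arrow K V A s t a * arrow K V A s t b' ∉ I → b = b') ∧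
    (∀ c c' : A, arrow K V A s t c * arrow K V A s t a ∉ I →
      arrow K V A s t c' * arrow K V A s t a ∉ I → c = c')

/-- `σ : Q₁ → Q₁ ∪ {⋄}` (with `⋄ = none`): `σ a = some b` iff `ab ∉ I`. -/
def SigmaSpec (I : TwoSidedIdeal (PathAlg K V A s t)) (σ : A → Option A) : Prop :=
  ∀ a b : A, σ a = some b ↔ arrow K V A s t a * arrow K V A s t b ∉ I

/-- `τ : Q₁ → Q₁ ∪ {⋄}` (with `⋄ = none`): `τ a = some c` iff `ca ∉ I`. -/
def TauSpec (I : TwoSidedIdeal (PathAlg K V A s t)) (τ : A → Option A) : Prop :=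
  ∀ a c : A, τ a = some c ↔ arrow K V A s t c * arrow K V A s t a ∉ I

end

/-- Iterate of `σ` (extended to `Q₁ ∪ {⋄}` by `σ(⋄) = ⋄`) applied to an arrow:
`OIter σ n a = σⁿ(a)`. -/
def OIter {A : Type} (σ : A → Option A) (n : ℕ) (a : A) : Option A :=
  (fun o => o.bind σ)^[n] (some a)

/-- A `(σ,τ)`-maximal path `a₁ ⋯ a_r`: `σ(aᵢ) = a_{i+1}`, `σ(a_r) = ⋄`,
`τ(a₁) = ⋄`. -/
def IsMaximalPath {A : Type} (σ τ : A → Option A) (l : List A) : Prop :=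
  l ≠ [] ∧ l.Chain' (fun x y => σ x = some y) ∧
    (∀ x ∈ l.getLast?, σ x = none) ∧ (∀ x ∈ l.head?, τ x = none)

/-- The cycle `C_a = a σ(a) ⋯ σ^{m̂_a−1}(a)`, where `m̂_a` is the least positive
integer with `σ^{m̂_a}(a) = a`:  `l` has entries the iterates of `σ` at `a` and
length the least positive return time of `a` under `σ`. -/
def IsSigmaCycleOf {A : Type} (σ : A → Option A) (a : A) (l : List A) : Prop :=
  l ≠ [] ∧ (∀ i : ℕ, i < l.length → l[i]? = OIter σ i a) ∧
    OIter σ l.length a = some a ∧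
    ∀ k : ℕ, 0 < k → k < l.length → OIter σ k a ≠ some a

/-- A list of arrows is composable (i.e. a genuine path) if the target of each
arrow is the source of the next. -/
def Composable {V A : Type} (s t : A → V) (l : List A) : Prop :=
  l.Chain' (fun a b => t a = s b)

/-- A simple cycle: a nonempty path with the same start and end vertex and no
repeated arrows. -/
def IsSimpleCycle {V A : Type} (s t : A → V) (l : List A) : Prop :=
  l ≠ [] ∧ Composable s t l ∧ (∀ x ∈ l.head?, ∀ y ∈ l.getLast?, t y = s x) ∧ l.Nodup

/-- The path `C^m` for a cycle `C`. -/
def cyclePow {A : Type} (l : List A) (m : ℕ) : List A := (List.replicate m l).flatten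

/-- A defining pair `(𝒮, μ)` in the quiver `Q`: a set `𝒮` of simple cycles and
`μ : 𝒮 → ℤ_{>0}` satisfying (D0)–(D4). -/
def IsDefiningPair {V A : Type} (s t : A → V) (S : Set (List A)) (μ : List A → ℕ) : Prop :=
  (∀ l ∈ S, IsSimpleCycle s t l) ∧
  (∀ l ∈ S, 0 < μ l) ∧
  (∀ l ∈ S, l.length = 1 → 1 < μ l) ∧
  (∀ l ∈ S, ∀ l' : List A, l.IsRotated l' → l' ∈ S) ∧
  (∀ l ∈ S, ∀ l' ∈ S, l.IsRotated l' → μ l = μ l') ∧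
  (∀ a : A, ∃ l ∈ S, a ∈ l) ∧
  (∀ l ∈ S, ∀ l' ∈ S, (∃ a : A, a ∈ l ∧ a ∈ l') → l.IsRotated l')

/-- The set of relations of Types 1, 2 and 3 attached to a defining pair:
Type 1: `C^{μ(C)} − C'^{μ(C')}` for `C, C' ∈ 𝒮` cycles at the same vertex;
Type 2: `C^{μ(C)} a` for `C ∈ 𝒮` with first arrow `a`;
Type 3: `ab` for arrows `a, b` with `ab` not a subpath of any `C^s`, `C ∈ 𝒮`. -/
def RelSet (K V A : Type) [Field K] [Fintype V] [DecidableEq V] (s t : A → V)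
    (S : Set (List A)) (μ : List A → ℕ) : Set (PathAlg K V A s t) :=
  {x | ∃ l ∈ S, ∃ l' ∈ S, ∃ a ∈ l.head?, ∃ a' ∈ l'.head?, s a = s a' ∧
      x = pathElem K V A s t (cyclePow l (μ l)) - pathElem K V A s t (cyclePow l' (μ l'))} ∪
  {x | ∃ l ∈ S, ∃ a ∈ l.head?, x = pathElem K V A s t (cyclePow l (μ l) ++ [a])} ∪
  {x | ∃ a b : A, x = arrow K V A s t a * arrow K V A s t b ∧
      ∀ l ∈ S, ∀ m : ℕ, ¬ [a, b] <:+: cyclePow l m}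

/-- The ideal of relations of a defining pair. -/
def DefIdeal (K V A : Type) [Field K] [Fintype V] [DecidableEq V] (s t : A → V)
    (S : Set (List A)) (μ : List A → ℕ) : TwoSidedIdeal (PathAlg K V A s t) :=
  TwoSidedIdeal.span (RelSet K V A s t S μ)

/-- The relation whose `RingQuot` is the algebra `KQ/I` defined by a defining
pair, `I` generated by the Type 1, 2, 3 relations. -/
def QRel (K V A : Type) [Field K] [Fintype V] [DecidableEq V] (s t : A → V)
    (S : Set (List A)) (μ : List A → ℕ) :
    PathAlg K V A s t → PathAlg K V A s t → Prop :=
  fun x y => x ∈ RelSet K V A s t S μ ∧ y = 0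

/-- The set ℳ of `(σ,τ)`-maximal paths. -/
def MaxPath {A : Type} (σ τ : A → Option A) : Type := {l : List A // IsMaximalPath σ τ l}

/-- The arrows of the quiver `Q*`: the arrows of `Q` together with one new
arrow `a_M` for each `(σ,τ)`-maximal path `M`. -/
def AStar {A : Type} (σ τ : A → Option A) : Type := A ⊕ MaxPath σ τ

/-- Source map of `Q*`: `a_M` starts at `t(M)`. -/
def sStar {V A : Type} (s t : A → V) (σ τ : A → Option A) : AStar σ τ → V
  | Sum.inl a => s a
  | Sum.inr M => t (M.val.getLast M.prop.1)

/-- Target map of `Q*`: `a_M` ends at `s(M)`. -/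
def tStar {V A : Type} (s t : A → V) (σ τ : A → Option A) : AStar σ τ → V
  | Sum.inl a => t a
  | Sum.inr M => s (M.val.head M.prop.1)

/-- `𝒮 = 𝒞 ∪ ℳ*` in `Q*`: the cycles `C_a`, together with all cyclic
permutations of the cycles `M a_M` for `M ∈ ℳ`. -/
def SStar {A : Type} (σ τ : A → Option A) : Set (List (AStar σ τ)) :=
  {L | ∃ (c : A) (l : List A), IsSigmaCycleOf σ c l ∧ L = l.map Sum.inl} ∪
  {L | ∃ M : MaxPath σ τ, (M.val.map Sum.inl ++ [Sum.inr M]).IsRotated L}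
/-! ### Auxiliary lemmas -/

namespace SMAux

variable {A : Type} {σ τ : A → Option A}

@[simp] theorem oiter_zero (σ : A → Option A) (a : A) : OIter σ 0 a = some a := rfl

theorem oiter_succ (σ : A → Option A) (n : ℕ) (a : A) :
    OIter σ (n + 1) a = (OIter σ n a).bind σ := by
  simp [OIter, Function.iterate_succ_apply']

theorem oiter_add (σ : A → Option A) (m n : ℕ) (a : A) :
    OIter σ (m + n) a = (OIter σ m a).bind fun b => OIter σ n b := by
  induction n with
  | zero => cases h : OIter σ m a <;> simp [h]
  | succ n ih =>
      rw [← Nat.add_assoc, oiter_succ, ih]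
      cases OIter σ m a <;> simp [oiter_succ]

theorem oiter_none_mono {m n : ℕ} {a : A} (h : OIter σ m a = none) (hmn : m ≤ n) :
    OIter σ n a = none := by
  rw [show n = m + (n - m) by omega, oiter_add, h]; rfl

theorem oiter_isSome_mono {m n : ℕ} {a : A} (h : (OIter σ n a).isSome) (hmn : m ≤ n) :
    (OIter σ m a).isSome := by
  cases hm : OIter σ m a with
  | none => rw [oiter_none_mono hm hmn] at h; simp at h
  | some x => rfl

theorem oiter_inj (hinj : ∀ a a' b : A, σ a = some b → σ a' = some b → a = a')
    {n : ℕ} {a a' x : A} (h : OIter σ n a = some x) (h' : OIter σ n a' = some x) : a = a' := by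
  induction n generalizing x with
  | zero =>
      simp only [oiter_zero, Option.some.injEq] at h h'
      exact h.trans h'.symm
  | succ n ih =>
      rw [oiter_succ] at h h'
      obtain ⟨y, hy, hyx⟩ := Option.bind_eq_some_iff.mp h
      obtain ⟨y', hy', hyx'⟩ := Option.bind_eq_some_iff.mp h'
      have : y = y' := hinj y y' x hyx hyx'
      subst this
      exact ih hy hy'

theorem oiter_period_add {m : ℕ} {a : A} (h : OIter σ m a = some a) (k : ℕ) :
    OIter σ (m + k) a = OIter σ k a := by rw [oiter_add, h]; rfl

theorem oiter_period_mul {m : ℕ} {a : A} (h : OIter σ m a = some a) (j : ℕ) :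
    OIter σ (j * m) a = some a := by
  induction j with
  | zero => simp
  | succ j ih => rw [Nat.succ_mul, oiter_add, ih]; exact h

theorem oiter_isSome_of_periodic {m : ℕ} {a : A} (hm : 0 < m) (h : OIter σ m a = some a)
    (k : ℕ) : (OIter σ k a).isSome := by
  have hk : k ≤ k * m := Nat.le_mul_of_pos_right _ hm
  exact oiter_isSome_mono (by rw [oiter_period_mul h k]; rfl) hk

theorem oiter_mod {m : ℕ} {a : A} (hm : 0 < m) (h : OIter σ m a = some a) (n : ℕ) :
    OIter σ n a = OIter σ (n % m) a := by
  conv_lhs => rw [show n = (n / m) * m + n % m by rw [Nat.div_add_mod']]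
  rw [oiter_add, oiter_period_mul h]; rfl

theorem oiter_adj (hadj : ∀ x y : A, σ x = some y ↔ τ y = some x)
    {k : ℕ} {a b : A} (h : OIter τ k a = some b) : OIter σ k b = some a := by
  induction k generalizing b with
  | zero =>
      simp only [oiter_zero, Option.some.injEq] at h ⊢
      exact h.symm
  | succ k ih =>
      rw [oiter_succ] at h
      obtain ⟨y, hy, hyb⟩ := Option.bind_eq_some_iff.mp h
      have hσb : σ b = some y := (hadj b y).mpr hyb
      rw [show k + 1 = 1 + k by omega, oiter_add]
      have h1 : OIter σ 1 b = σ b := by rw [oiter_succ, oiter_zero]; rfl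
      rw [h1, hσb]
      exact ih hy

/-! ### Cycle lemmas -/

theorem cycle_getElem? {c : A} {l : List A} (h : IsSigmaCycleOf σ c l) {i : ℕ}
    (hi : i < l.length) : l[i]? = OIter σ i c := h.2.1 i hi

theorem cycle_length_pos {c : A} {l : List A} (h : IsSigmaCycleOf σ c l) : 0 < l.length :=
  List.length_pos_iff.mpr h.1

theorem cycle_unique {c : A} {l l' : List A} (h : IsSigmaCycleOf σ c l)
    (h' : IsSigmaCycleOf σ c l') : l = l' := by
  have hlen : l.length = l'.length := by
    rcases Nat.lt_trichotomy l.length l'.length with hlt | he | hgt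
    · exact absurd h.2.2.1 (h'.2.2.2 _ (cycle_length_pos h) hlt)
    · exact he
    · exact absurd h'.2.2.1 (h.2.2.2 _ (cycle_length_pos h') hgt)
  apply List.ext_getElem?
  intro n
  by_cases hn : n < l.length
  · rw [cycle_getElem? h hn, cycle_getElem? h' (hlen ▸ hn)]
  · rw [List.getElem?_eq_none (by omega), List.getElem?_eq_none (by omega)]

theorem cycle_rotate (hinj : ∀ a a' b : A, σ a = some b → σ a' = some b → a = a')
    {c b : A} {l : List A} (h : IsSigmaCycleOf σ c l)
    {k : ℕ} (hk : k < l.length) (hb : OIter σ k c = some b) :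
    IsSigmaCycleOf σ b (l.rotate k) := by
  have hm : 0 < l.length := cycle_length_pos h
  have hper := h.2.2.1
  refine ⟨?_, ?_, ?_, ?_⟩
  · exact List.length_pos_iff.mp (by rw [List.length_rotate]; exact hm)
  · intro i hi
    rw [List.length_rotate] at hi
    rw [List.getElem?_rotate hi, cycle_getElem? h (Nat.mod_lt _ hm), ← oiter_mod hm hper,
      Nat.add_comm, oiter_add, hb]; rfl
  · rw [List.length_rotate]
    have h1 : OIter σ (k + l.length) c = OIter σ l.length b := by rw [oiter_add, hb]; rfl
    have h2 : OIter σ (k + l.length) c = some b := by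
      rw [Nat.add_comm, oiter_period_add hper, hb]
    rw [← h1, h2]
  · intro j hj0 hjm hcon
    rw [List.length_rotate] at hjm
    have hx : (OIter σ j c).isSome := oiter_isSome_mono (by rw [hper]; rfl) hjm.le
    obtain ⟨x, hx⟩ := Option.isSome_iff_exists.mp hx
    have h3 : OIter σ (j + k) c = OIter σ k x := by rw [oiter_add, hx]; rfl
    have h4 : OIter σ (j + k) c = some b := by
      rw [Nat.add_comm, oiter_add, hb]; exact hcon
    have h5 : OIter σ k x = some b := by rw [← h3, h4]
    have hxc : x = c := oiter_inj hinj h5 hb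
    rw [hxc] at hx
    exact h.2.2.2 j hj0 hjm hx

theorem some_getD {α : Type} {o : Option α} (d : α) (h : o.isSome) : some (o.getD d) = o := by
  cases o with
  | none => simp at h
  | some x => rfl

theorem cycle_exists {a : A} (hper : ∃ m, 0 < m ∧ OIter σ m a = some a) :
    ∃ l, IsSigmaCycleOf σ a l := by
  classical
  obtain ⟨hm0, hma⟩ := Nat.find_spec hper
  set m := Nat.find hper with hmdef
  have hsome : ∀ i, i ≤ m → (OIter σ i a).isSome := fun i hi =>
    oiter_isSome_mono (by rw [hma]; rfl) hi
  refine ⟨List.ofFn (fun i : Fin m => (OIter σ i.1 a).getD a), ?_, ?_, ?_, ?_⟩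
  · exact List.length_pos_iff.mp (by rw [List.length_ofFn]; exact hm0)
  · intro i hi
    rw [List.length_ofFn] at hi
    rw [List.getElem?_ofFn]
    simp only [List.ofFnNthVal, hi, dif_pos]
    exact some_getD a (hsome i hi.le)
  · rw [List.length_ofFn]; exact hma
  · intro k hk0 hkm
    rw [List.length_ofFn] at hkm
    intro hcon
    exact Nat.find_min hper hkm ⟨hk0, hcon⟩

theorem cycle_mem {c b : A} {l : List A} (h : IsSigmaCycleOf σ c l) (hb : b ∈ l) :
    ∃ k, k < l.length ∧ OIter σ k c = some b := by
  obtain ⟨k, hk⟩ := List.mem_iff_getElem?.mp hb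
  have hkl : k < l.length := by
    by_contra hx
    rw [List.getElem?_eq_none (by omega)] at hk
    simp at hk
  exact ⟨k, hkl, by rw [← cycle_getElem? h hkl]; exact hk⟩

theorem cycle_periodic {c b : A} {l : List A} (h : IsSigmaCycleOf σ c l) (hb : b ∈ l) :
    OIter σ l.length b = some b := by
  obtain ⟨k, hkl, hk⟩ := cycle_mem h hb
  have h1 : OIter σ (k + l.length) c = OIter σ l.length b := by rw [oiter_add, hk]; rfl
  have h2 : OIter σ (k + l.length) c = some b := by
    rw [Nat.add_comm, oiter_period_add h.2.2.1, hk]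
  rw [← h1, h2]

theorem cycle_nodup (hinj : ∀ a a' b : A, σ a = some b → σ a' = some b → a = a')
    {c : A} {l : List A} (h : IsSigmaCycleOf σ c l) : l.Nodup := by
  rw [List.nodup_iff_getElem?_ne_getElem?]
  intro i j hij hjl heq
  have hi := cycle_getElem? h (i := i) (by omega)
  have hj := cycle_getElem? h hjl
  obtain ⟨b, hb⟩ : ∃ b, OIter σ i c = some b :=
    ⟨_, by rw [← hi]; exact List.getElem?_eq_getElem (by omega)⟩
  have hjb : OIter σ j c = some b := by rw [← hj, ← heq, hi, hb]
  have hx : (OIter σ (j - i) c).isSome :=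
    oiter_isSome_mono (by rw [hjb]; rfl) (by omega)
  obtain ⟨x, hx⟩ := Option.isSome_iff_exists.mp hx
  have h3 : OIter σ j c = OIter σ i x := by
    rw [show j = (j - i) + i by omega, oiter_add, hx]; rfl
  have h5 : OIter σ i x = some b := by rw [← h3, hjb]
  have hxc : x = c := oiter_inj hinj h5 hb
  rw [hxc] at hx
  exact h.2.2.2 (j - i) (by omega) (by omega) hx

theorem cycle_sigma {c : A} {l : List A} (h : IsSigmaCycleOf σ c l) {i : ℕ}
    (hi : i < l.length) : l[(i + 1) % l.length]? = σ (l[i]'hi) := by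
  have hm : 0 < l.length := cycle_length_pos h
  rw [cycle_getElem? h (Nat.mod_lt _ hm), ← oiter_mod hm h.2.2.1, oiter_succ,
    ← cycle_getElem? h hi, List.getElem?_eq_getElem hi]
  rfl

/-! ### Maximal path lemmas -/

theorem chain'_getElem {B : Type} {R : B → B → Prop} {l : List B} (h : l.Chain' R) {i : ℕ}
    (hi : i + 1 < l.length) : R (l[i]'(by omega)) (l[i+1]'hi) := by
  have := List.isChain_iff_getElem.mp h i (by omega)
  simpa [List.get_eq_getElem] using this

theorem max_getElem? {l : List A} (hl : IsMaximalPath σ τ l) :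
    ∀ i, i < l.length → l[i]? = OIter σ i (l.head hl.1) := by
  intro i
  induction i with
  | zero =>
      intro h0
      rw [oiter_zero, ← List.head?_eq_getElem?]
      exact List.head?_eq_head hl.1
  | succ i ih =>
      intro hi
      have hi' : i < l.length := by omega
      have hstep : σ (l[i]'hi') = some (l[i+1]'hi) := chain'_getElem hl.2.1 hi
      rw [List.getElem?_eq_getElem hi, oiter_succ, ← ih hi', List.getElem?_eq_getElem hi']
      exact hstep.symm

theorem max_oiter_none {l : List A} (hl : IsMaximalPath σ τ l) :
    OIter σ l.length (l.head hl.1) = none := by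
  have hlen : 0 < l.length := List.length_pos_iff.mpr hl.1
  have hlast : l[l.length - 1]? = OIter σ (l.length - 1) (l.head hl.1) :=
    max_getElem? hl _ (by omega)
  have hσlast : σ (l.getLast hl.1) = none := by
    exact hl.2.2.1 _ (List.getLast?_eq_getLast hl.1)
  rw [show l.length = (l.length - 1) + 1 by omega, oiter_succ, ← hlast,
    List.getElem?_eq_getElem (show l.length - 1 < l.length by omega)]
  have : l[l.length - 1]'(by omega) = l.getLast hl.1 := (List.getLast_eq_getElem hl.1).symm
  rw [this]
  exact hσlast

theorem max_oiter_isSome {l : List A} (hl : IsMaximalPath σ τ l) {i : ℕ} (hi : i < l.length) :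
    (OIter σ i (l.head hl.1)).isSome := by
  rw [← max_getElem? hl i hi, List.getElem?_eq_getElem hi]; rfl

theorem max_head_aux (hinj : ∀ a a' b : A, σ a = some b → σ a' = some b → a = a')
    (hadj : ∀ x y : A, σ x = some y ↔ τ y = some x)
    {h h' b : A} {i j : ℕ} (hij : i ≤ j)
    (hih : OIter σ i h = some b) (hjh : OIter σ j h' = some b)
    (hsomej : ∀ k, k ≤ j → (OIter σ k h').isSome)
    (hτ : τ h = none) : h = h' ∧ i = j := by
  obtain ⟨x, hx⟩ := Option.isSome_iff_exists.mp (hsomej (j - i) (by omega))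
  have h1 : OIter σ j h' = OIter σ i x := by
    rw [show j = (j - i) + i by omega, oiter_add, hx]; rfl
  have hx2 : OIter σ i x = some b := by rw [← h1]; exact hjh
  have hxh : x = h := oiter_inj hinj hx2 hih
  subst hxh
  rcases Nat.eq_zero_or_pos (j - i) with h0 | hpos
  · constructor
    · have : OIter σ 0 h' = some x := by rw [← h0]; exact hx
      rw [oiter_zero] at this
      exact (Option.some.injEq _ _ ▸ this).symm
    · omega
  · exfalso
    rw [show j - i = (j - i - 1) + 1 by omega, oiter_succ] at hx
    obtain ⟨y, _, hy2⟩ := Option.bind_eq_some_iff.mp hx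
    rw [(hadj y x).mp hy2] at hτ
    cases hτ

theorem max_unique (hinj : ∀ a a' b : A, σ a = some b → σ a' = some b → a = a')
    (hadj : ∀ x y : A, σ x = some y ↔ τ y = some x)
    {l l' : List A} (hl : IsMaximalPath σ τ l) (hl' : IsMaximalPath σ τ l')
    {b : A} (hb : b ∈ l) (hb' : b ∈ l') : l = l' := by
  obtain ⟨i, hi⟩ := List.mem_iff_getElem?.mp hb
  obtain ⟨j, hj⟩ := List.mem_iff_getElem?.mp hb'
  have hil : i < l.length := by
    by_contra hx; rw [List.getElem?_eq_none (by omega)] at hi; cases hi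
  have hjl : j < l'.length := by
    by_contra hx; rw [List.getElem?_eq_none (by omega)] at hj; cases hj
  have hoi : OIter σ i (l.head hl.1) = some b := by rw [← max_getElem? hl i hil]; exact hi
  have hoj : OIter σ j (l'.head hl'.1) = some b := by rw [← max_getElem? hl' j hjl]; exact hj
  have hτl : τ (l.head hl.1) = none := by
    exact hl.2.2.2 _ (List.head?_eq_head hl.1)
  have hτl' : τ (l'.head hl'.1) = none := by
    exact hl'.2.2.2 _ (List.head?_eq_head hl'.1)
  have hheads : l.head hl.1 = l'.head hl'.1 := by
    rcases Nat.le_total i j with hij | hij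
    · exact (max_head_aux hinj hadj hij hoi hoj
        (fun k hk => max_oiter_isSome hl' (by omega)) hτl).1
    · exact ((max_head_aux hinj hadj hij hoj hoi
        (fun k hk => max_oiter_isSome hl (by omega)) hτl').1).symm
  have hlen : l.length = l'.length := by
    rcases Nat.lt_trichotomy l.length l'.length with hlt | he | hgt
    · exfalso
      have := max_oiter_isSome hl' (i := l.length) hlt
      rw [← hheads, max_oiter_none hl] at this
      cases this
    · exact he
    · exfalso
      have := max_oiter_isSome hl (i := l'.length) hgt
      rw [hheads, max_oiter_none hl'] at this
      cases this
  apply List.ext_getElem?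
  intro n
  by_cases hn : n < l.length
  · rw [max_getElem? hl n hn, max_getElem? hl' n (hlen ▸ hn), hheads]
  · rw [List.getElem?_eq_none (by omega), List.getElem?_eq_none (by omega)]

theorem max_not_periodic {l : List A} (hl : IsMaximalPath σ τ l) {b : A} (hb : b ∈ l)
    {p : ℕ} (hp : 0 < p) (hper : OIter σ p b = some b) : False := by
  obtain ⟨j, hj⟩ := List.mem_iff_getElem?.mp hb
  have hjl : j < l.length := by
    by_contra hx; rw [List.getElem?_eq_none (by omega)] at hj; cases hj
  have hoj : OIter σ j (l.head hl.1) = some b := by rw [← max_getElem? hl j hjl]; exact hj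
  have hnone : OIter σ (l.length - j) b = none := by
    have h1 : OIter σ (j + (l.length - j)) (l.head hl.1) = OIter σ (l.length - j) b := by
      rw [oiter_add, hoj]; rfl
    rw [show j + (l.length - j) = l.length by omega] at h1
    rw [← h1, max_oiter_none hl]
  have := oiter_isSome_of_periodic hp hper (l.length - j)
  rw [hnone] at this
  cases this

theorem max_nodup {l : List A} (hl : IsMaximalPath σ τ l) : l.Nodup := by
  rw [List.nodup_iff_getElem?_ne_getElem?]
  intro i j hij hjl heq
  have hi := max_getElem? hl i (by omega)
  have hj := max_getElem? hl j hjl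
  obtain ⟨b, hb⟩ : ∃ b, OIter σ i (l.head hl.1) = some b :=
    ⟨_, by rw [← hi]; exact List.getElem?_eq_getElem (by omega)⟩
  have hjb : OIter σ j (l.head hl.1) = some b := by rw [← hj, ← heq, hi, hb]
  have hper : OIter σ (j - i) b = some b := by
    have h1 : OIter σ (i + (j - i)) (l.head hl.1) = OIter σ (j - i) b := by
      rw [oiter_add, hb]; rfl
    rw [show i + (j - i) = j by omega] at h1
    rw [← h1, hjb]
  exact max_not_periodic hl (List.mem_iff_getElem?.mpr ⟨i, by rw [hi, hb]⟩) (by omega) hper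

/-! ### Existence of cycles or maximal paths through an arrow -/

theorem exists_oiter_none [Fintype A] {σ : A → Option A}
    (hinj : ∀ a a' b : A, σ a = some b → σ a' = some b → a = a') (a : A)
    (hper : ¬ ∃ m, 0 < m ∧ OIter σ m a = some a) : ∃ r, OIter σ r a = none := by
  by_contra hno
  push_neg at hno
  obtain ⟨i, j, hij, hf⟩ := Finite.exists_ne_map_eq_of_infinite (fun n : ℕ => OIter σ n a)
  wlog h : i < j generalizing i j
  · exact this j i hij.symm hf.symm (by omega)
  obtain ⟨x, hx⟩ := Option.ne_none_iff_exists'.mp (hno i)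
  obtain ⟨y, hy⟩ := Option.ne_none_iff_exists'.mp (hno (j - i))
  have h1 : OIter σ j a = OIter σ i y := by
    rw [show j = (j - i) + i by omega, oiter_add, hy]; rfl
  have h2 : OIter σ i y = some x := by rw [← h1, ← hf]; exact hx
  have : y = a := oiter_inj hinj h2 hx
  rw [this] at hy
  exact hper ⟨j - i, by omega, hy⟩

theorem exists_maxpath_mem {σ τ : A → Option A}
    (hadj : ∀ x y : A, σ x = some y ↔ τ y = some x)
    (a : A) (hr : ∃ r, OIter σ r a = none) (hq : ∃ q, OIter τ q a = none) :
    ∃ l : List A, IsMaximalPath σ τ l ∧ a ∈ l := by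
  classical
  obtain hrs := Nat.find_spec hr
  obtain hqs := Nat.find_spec hq
  set r := Nat.find hr with hrdef
  set q := Nat.find hq with hqdef
  have hr0 : 0 < r := by
    rcases Nat.eq_zero_or_pos r with h | h
    · rw [h, oiter_zero] at hrs; cases hrs
    · exact h
  have hq0 : 0 < q := by
    rcases Nat.eq_zero_or_pos q with h | h
    · rw [h, oiter_zero] at hqs; cases hqs
    · exact h
  obtain ⟨c, hc⟩ := Option.ne_none_iff_exists'.mp (Nat.find_min hq (show q - 1 < q by omega))
  have hτc : τ c = none := by
    have h1 : OIter τ ((q - 1) + 1) a = (OIter τ (q - 1) a).bind τ := oiter_succ τ _ a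
    rw [hc, show (q - 1) + 1 = q by omega, hqs] at h1
    exact h1.symm
  have hca : OIter σ (q - 1) c = some a := oiter_adj hadj hc
  set len := (q - 1) + r with hlendef
  have hsome : ∀ i, i < len → (OIter σ i c).isSome := by
    intro i hi
    rcases Nat.le_total i (q - 1) with h | h
    · exact oiter_isSome_mono (by rw [hca]; rfl) h
    · have hk : i - (q - 1) < r := by omega
      have h2 : OIter σ ((q - 1) + (i - (q - 1))) c = OIter σ (i - (q - 1)) a := by
        rw [oiter_add, hca]; rfl
      rw [show (q - 1) + (i - (q - 1)) = i by omega] at h2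
      rw [Option.isSome_iff_ne_none, h2]
      exact Nat.find_min hr hk
  set p := List.ofFn (fun i : Fin len => (OIter σ i.1 c).getD a) with hpdef
  have hplen : p.length = len := List.length_ofFn
  have hent : ∀ i, i < len → p[i]? = OIter σ i c := by
    intro i hi
    rw [hpdef, List.getElem?_ofFn]
    simp only [List.ofFnNthVal, hi, dif_pos]
    exact some_getD a (hsome i hi)
  have hnone : OIter σ len c = none := by
    have h2 : OIter σ ((q - 1) + r) c = OIter σ r a := by rw [oiter_add, hca]; rfl
    rw [hlendef, h2, hrs]
  have hlen0 : 0 < len := by omega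
  refine ⟨p, ⟨?_, ?_, ?_, ?_⟩, ?_⟩
  · exact List.length_pos_iff.mp (by omega)
  · refine List.isChain_iff_getElem.mpr ?_
    intro i hi
    rw [hplen] at hi
    have hi1 : i + 1 < len := by omega
    have e1 : OIter σ i c = some (p[i]'(by omega)) := by
      rw [← hent i (by omega)]
      exact List.getElem?_eq_getElem (by omega)
    have e2 : OIter σ (i + 1) c = some (p[i+1]'(by omega)) := by
      rw [← hent (i + 1) hi1]
      exact List.getElem?_eq_getElem (by omega)
    rw [oiter_succ, e1] at e2
    exact e2
  · intro x hx
    have hx' : p[len - 1]? = some x := by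
      rw [show len - 1 = p.length - 1 by omega, ← List.getLast?_eq_getElem?]
      exact hx
    have e3 : OIter σ (len - 1) c = some x := by
      rw [← hent (len - 1) (by omega)]
      exact hx'
    have h3 : OIter σ ((len - 1) + 1) c = (OIter σ (len - 1) c).bind σ := oiter_succ σ _ c
    rw [show (len - 1) + 1 = len by omega, hnone, e3] at h3
    exact h3.symm
  · intro x hx
    have hx' : p[0]? = some x := by
      rw [← List.head?_eq_getElem?]
      exact hx
    have e4 : OIter σ 0 c = some x := by
      rw [← hent 0 (by omega)]
      exact hx'
    rw [oiter_zero] at e4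
    rw [← Option.some.inj e4]
    exact hτc
  · exact List.mem_iff_getElem?.mpr ⟨q - 1, by rw [hent (q - 1) (by omega), hca]⟩

/-! ### Simple cycles via indices -/

def Cyc {V B : Type} (s t : B → V) (l : List B) : Prop :=
  l ≠ [] ∧ l.Nodup ∧ ∀ (i j : ℕ) (hi : i < l.length) (hj : j < l.length),
    j = (i + 1) % l.length → t (l[i]'hi) = s (l[j]'hj)

theorem cyc_isSimpleCycle {V B : Type} (s t : B → V) {l : List B} (h : Cyc s t l) :
    IsSimpleCycle s t l := by
  obtain ⟨hne, hnd, hcy⟩ := h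
  have hl0 : 0 < l.length := List.length_pos_iff.mpr hne
  refine ⟨hne, ?_, ?_, hnd⟩
  · refine List.isChain_iff_getElem.mpr ?_
    intro i hi
    exact hcy i (i + 1) (by omega) (by omega) (by rw [Nat.mod_eq_of_lt (by omega)])
  · intro x hx y hy
    have hx' : l[0]? = some x := by rw [← List.head?_eq_getElem?]; exact hx
    have hy' : l[l.length - 1]? = some y := by rw [← List.getLast?_eq_getElem?]; exact hy
    obtain ⟨hx1, hx2⟩ := List.getElem?_eq_some_iff.mp hx'
    obtain ⟨hy1, hy2⟩ := List.getElem?_eq_some_iff.mp hy'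
    rw [← hx2, ← hy2]
    exact hcy (l.length - 1) 0 hy1 hx1
      (by rw [show l.length - 1 + 1 = l.length by omega, Nat.mod_self])

theorem cyc_rotate {V B : Type} (s t : B → V) {l : List B} (h : Cyc s t l) (n : ℕ) :
    Cyc s t (l.rotate n) := by
  obtain ⟨hne, hnd, hcy⟩ := h
  have hl0 : 0 < l.length := List.length_pos_iff.mpr hne
  refine ⟨?_, List.nodup_rotate.mpr hnd, ?_⟩
  · exact List.length_pos_iff.mp (by rw [List.length_rotate]; exact hl0)
  · intro i j hi hj hij
    rw [List.length_rotate] at hi hj hij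
    rw [List.getElem_rotate, List.getElem_rotate]
    apply hcy _ _ (Nat.mod_lt _ hl0) (Nat.mod_lt _ hl0)
    rw [hij, Nat.mod_add_mod, Nat.mod_add_mod, show i + 1 + n = i + n + 1 from by omega]

theorem cyc_map {V B C : Type} {s t : B → V} {s' t' : C → V} (f : B → C)
    (hf : Function.Injective f) (hs : ∀ b, s' (f b) = s b) (ht : ∀ b, t' (f b) = t b)
    {l : List B} (h : Cyc s t l) : Cyc s' t' (l.map f) := by
  obtain ⟨hne, hnd, hcy⟩ := h
  refine ⟨by simpa using hne, hnd.map hf, ?_⟩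
  intro i j hi hj hij
  rw [List.length_map] at hi hj hij
  rw [List.getElem_map, List.getElem_map, hs, ht]
  exact hcy i j hi hj hij

theorem cyc_of_cycle {V : Type} (s t : A → V)
    (hcomp : ∀ x y : A, σ x = some y → t x = s y)
    (hinj : ∀ a a' b : A, σ a = some b → σ a' = some b → a = a')
    {c : A} {l : List A} (h : IsSigmaCycleOf σ c l) : Cyc s t l := by
  refine ⟨h.1, cycle_nodup hinj h, ?_⟩
  intro i j hi hj hij
  apply hcomp
  have h1 := cycle_sigma h hi
  rw [← hij] at h1
  rw [← h1]
  exact List.getElem?_eq_getElem hj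

theorem cyc_of_max {V : Type} (s t : A → V) {σ τ : A → Option A}
    (hcomp : ∀ x y : A, σ x = some y → t x = s y)
    (M : MaxPath σ τ) :
    Cyc (sStar s t σ τ) (tStar s t σ τ) (M.val.map Sum.inl ++ [Sum.inr M]) := by
  unfold AStar
  have hne : M.val ≠ [] := M.prop.1
  have hn0 : 0 < M.val.length := List.length_pos_iff.mpr hne
  refine ⟨by simp, ?_, ?_⟩
  · rw [List.nodup_append]
    refine ⟨(max_nodup M.prop).map Sum.inl_injective, List.nodup_singleton _, ?_⟩
    intro a ha b hb hab
    obtain ⟨x, _, rfl⟩ := List.mem_map.mp ha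
    rw [List.mem_singleton.mp hb] at hab
    cases hab
  · intro i j hi hj hij
    have hlen : (M.val.map Sum.inl ++ [Sum.inr M] : List (A ⊕ MaxPath σ τ)).length
        = M.val.length + 1 := by simp
    rw [hlen] at hi hj hij
    rcases Nat.lt_or_ge i M.val.length with hiM | hiM
    · have e1 : ((M.val.map Sum.inl ++ [Sum.inr M] : List (A ⊕ MaxPath σ τ)))[i]'(by omega)
          = Sum.inl (M.val[i]'hiM) := by
        rw [List.getElem_append_left (by simpa using hiM), List.getElem_map]
      rcases Nat.lt_or_ge (i + 1) M.val.length with hi1 | hi1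
      · have hji : j = i + 1 := by rw [hij, Nat.mod_eq_of_lt (by omega)]
        subst hji
        have e2 : ((M.val.map Sum.inl ++ [Sum.inr M] : List (A ⊕ MaxPath σ τ)))[i + 1]'(by omega)
            = Sum.inl (M.val[i + 1]'hi1) := by
          rw [List.getElem_append_left (by simpa using hi1), List.getElem_map]
        simp only [e1, e2]
        exact hcomp _ _ (chain'_getElem M.prop.2.1 hi1)
      · have hin : i = M.val.length - 1 := by omega
        have hji : j = M.val.length := by rw [hij, Nat.mod_eq_of_lt (by omega)]; omega
        subst hji
        have e2 : ((M.val.map Sum.inl ++ [Sum.inr M] : List (A ⊕ MaxPath σ τ)))[M.val.length]'(by omega)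
            = Sum.inr M := by
          rw [List.getElem_append_right (by simp)]
          simp
        simp only [e1, e2]
        show t _ = t (M.val.getLast hne)
        rw [List.getLast_eq_getElem hne]
        subst hin
        rfl
    · have hiM' : i = M.val.length := by omega
      subst hiM'
      have hj0 : j = 0 := by
        rw [hij, show M.val.length + 1 = (M.val.length + 1) * 1 by omega]
        simp [Nat.mul_mod_left]
      subst hj0
      have e1 : ((M.val.map Sum.inl ++ [Sum.inr M] : List (A ⊕ MaxPath σ τ)))[M.val.length]'(by omega)
          = Sum.inr M := by
        rw [List.getElem_append_right (by simp)]
        simp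
      have e2 : ((M.val.map Sum.inl ++ [Sum.inr M] : List (A ⊕ MaxPath σ τ)))[0]'(by omega)
          = Sum.inl (M.val[0]'hn0) := by
        rw [List.getElem_append_left (by simpa using hn0), List.getElem_map]
      simp only [e1, e2]
      show s (M.val.head hne) = s _
      rw [List.head_eq_getElem hne]

end SMAux

namespace SMAux

section Alg

variable (K V A : Type) [Field K] [Fintype V] [DecidableEq V] (s t : A → V)

theorem vtx_mul_vtx {v w : V} (h : v ≠ w) : vtx K V A s t v * vtx K V A s t w = 0 := by
  unfold vtx
  rw [← map_mul, RingQuot.mkAlgHom_rel K (PathRel.vtxMul v w), if_neg h, map_zero]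

theorem arrow_mul_vtx (a : A) :
    arrow K V A s t a * vtx K V A s t (t a) = arrow K V A s t a := by
  unfold arrow vtx
  rw [← map_mul, RingQuot.mkAlgHom_rel K (PathRel.tgt a)]

theorem vtx_mul_arrow (b : A) :
    vtx K V A s t (s b) * arrow K V A s t b = arrow K V A s t b := by
  unfold arrow vtx
  rw [← map_mul, RingQuot.mkAlgHom_rel K (PathRel.src b)]

theorem arrow_mul_arrow_eq_zero {a b : A} (h : t a ≠ s b) :
    arrow K V A s t a * arrow K V A s t b = 0 := by
  conv_lhs => rw [← arrow_mul_vtx K V A s t a, ← vtx_mul_arrow K V A s t b]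
  rw [mul_assoc, ← mul_assoc (vtx K V A s t (t a)), vtx_mul_vtx K V A s t h, zero_mul,
    mul_zero]

end Alg

end SMAux

/-- Let `A = KQ/I` be special multiserial, `Q*` the quiver
obtained from `Q` by adding an arrow `a_M : t(M) → s(M)` for each
`(σ,τ)`-maximal path `M`, let `𝒮 = 𝒞 ∪ ℳ*` and let `μ ≡ N` on `𝒮`, where
`N ≥ 2` is minimal such that all paths of length `≥ N` in `KQ` lie in `I`.
Then `(𝒮, μ)` is a defining pair in `Q*`. -/
theorem associated_defining_pair
    (K V A : Type) [Field K] [Fintype V] [DecidableEq V] [Fintype A]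
    (s t : A → V) (I : TwoSidedIdeal (PathAlg K V A s t))
    (hAdm : Admissible K V A s t I) (hM : ConditionM K V A s t I)
    (σ τ : A → Option A) (hσ : SigmaSpec K V A s t I σ) (hτ : TauSpec K V A s t I τ)
    (N : ℕ) (hN2 : 2 ≤ N)
    (hNin : ∀ l : List A, N ≤ l.length → pathElem K V A s t l ∈ I)
    (hNmin : ∀ N' : ℕ, 2 ≤ N' → (∀ l : List A, N' ≤ l.length → pathElem K V A s t l ∈ I) →
      N ≤ N') :
    IsDefiningPair (sStar s t σ τ) (tStar s t σ τ) (SStar σ τ)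
      (fun _ : List (AStar σ τ) => N) := by
  classical
  have hinj : ∀ a a' b : A, σ a = some b → σ a' = some b → a = a' := fun a a' b h1 h2 =>
    (hM b).2 a a' ((hσ a b).mp h1) ((hσ a' b).mp h2)
  have hadj : ∀ x y : A, σ x = some y ↔ τ y = some x := fun x y =>
    (hσ x y).trans (hτ y x).symm
  have hcomp : ∀ x y : A, σ x = some y → t x = s y := by
    intro x y hxy
    by_contra hne
    exact (hσ x y).mp hxy
      (by rw [SMAux.arrow_mul_arrow_eq_zero K V A s t hne]; exact I.zero_mem)
  refine ⟨?_, ?_, ?_, ?_, ?_, ?_, ?_⟩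
  · -- (simple cycles)
    rintro L (⟨c, lc, hcyc, rfl⟩ | ⟨M, n, rfl⟩)
    · exact SMAux.cyc_isSimpleCycle _ _
        (SMAux.cyc_map Sum.inl Sum.inl_injective (fun b => rfl) (fun b => rfl)
          (SMAux.cyc_of_cycle s t hcomp hinj hcyc))
    · exact SMAux.cyc_isSimpleCycle _ _
        (SMAux.cyc_rotate _ _ (SMAux.cyc_of_max s t hcomp M) n)
  · intro l _
    show 0 < N
    omega
  · intro l _ _
    show 1 < N
    omega
  · -- (D1) closure under rotation
    rintro L (⟨c, lc, hcyc, rfl⟩ | ⟨M, hrot⟩) L' hrot'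
    · obtain ⟨n, rfl⟩ := hrot'
      left
      have hm : 0 < lc.length := SMAux.cycle_length_pos hcyc
      have hk : n % lc.length < lc.length := Nat.mod_lt _ hm
      have hsome : (OIter σ (n % lc.length) c).isSome := by
        rw [← SMAux.cycle_getElem? hcyc hk, List.getElem?_eq_getElem hk]
        rfl
      obtain ⟨b, hb⟩ := Option.isSome_iff_exists.mp hsome
      refine ⟨b, lc.rotate (n % lc.length), SMAux.cycle_rotate hinj hcyc hk hb, ?_⟩
      rw [List.map_rotate, ← List.length_map (as := lc) Sum.inl, List.rotate_mod]
      rfl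
    · exact Or.inr ⟨M, hrot.trans hrot'⟩
  · -- (D2) μ constant
    intro l _ l' _ _
    rfl
  · -- (D3) every arrow occurs
    intro x
    cases x with
    | inr M =>
        refine ⟨M.val.map Sum.inl ++ [Sum.inr M], Or.inr ⟨M, List.IsRotated.refl _⟩, ?_⟩
        exact List.mem_append_right _ (List.mem_singleton_self _)
    | inl a =>
        by_cases hper : ∃ m, 0 < m ∧ OIter σ m a = some a
        · obtain ⟨lc, hcyc⟩ := SMAux.cycle_exists hper
          refine ⟨lc.map Sum.inl, Or.inl ⟨a, lc, hcyc, rfl⟩, ?_⟩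
          apply List.mem_map_of_mem
          exact List.mem_iff_getElem?.mpr
            ⟨0, by rw [SMAux.cycle_getElem? hcyc (SMAux.cycle_length_pos hcyc),
              SMAux.oiter_zero]⟩
        · have hτper : ¬ ∃ m, 0 < m ∧ OIter τ m a = some a := by
            rintro ⟨m, hm0, hmτ⟩
            exact hper ⟨m, hm0, SMAux.oiter_adj hadj hmτ⟩
          have hτinj : ∀ y y' x : A, τ y = some x → τ y' = some x → y = y' := by
            intro y y' x h1 h2
            have e2 := (hadj x y').mpr h2
            rw [(hadj x y).mpr h1] at e2
            exact Option.some.inj e2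
          obtain ⟨lm, hlm, ha⟩ := SMAux.exists_maxpath_mem hadj a
            (SMAux.exists_oiter_none hinj a hper)
            (SMAux.exists_oiter_none hτinj a hτper)
          refine ⟨(⟨lm, hlm⟩ : MaxPath σ τ).val.map Sum.inl ++ [Sum.inr ⟨lm, hlm⟩],
            Or.inr ⟨⟨lm, hlm⟩, List.IsRotated.refl _⟩, ?_⟩
          exact List.mem_append_left _ (List.mem_map_of_mem ha)
  · -- (D4) cycles sharing an arrow
    rintro L hL L' hL' ⟨x, hxL, hxL'⟩
    rcases hL with ⟨c, lc, hcyc, rfl⟩ | ⟨M, hrot⟩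
    · rcases hL' with ⟨c', lc', hcyc', rfl⟩ | ⟨M', hrot'⟩
      · obtain ⟨b, hbl, rfl⟩ := List.mem_map.mp hxL
        have hbl' : b ∈ lc' := by
          obtain ⟨b', hb', he⟩ := List.mem_map.mp hxL'
          rwa [← Sum.inl_injective he]
        obtain ⟨i, hil, hib⟩ := SMAux.cycle_mem hcyc hbl
        obtain ⟨j, hjl, hjb⟩ := SMAux.cycle_mem hcyc' hbl'
        have heq : lc.rotate i = lc'.rotate j :=
          SMAux.cycle_unique (SMAux.cycle_rotate hinj hcyc hil hib)
            (SMAux.cycle_rotate hinj hcyc' hjl hjb)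
        have h1 : (lc.map Sum.inl : List (AStar σ τ)).IsRotated
            ((lc.rotate i).map Sum.inl) := by
          exact ⟨i, (List.map_rotate _ _ _).symm⟩
        have h2 : (lc'.map Sum.inl : List (AStar σ τ)).IsRotated
            ((lc'.rotate j).map Sum.inl) := by
          exact ⟨j, (List.map_rotate _ _ _).symm⟩
        rw [heq] at h1
        exact h1.trans h2.symm
      · exfalso
        obtain ⟨b, hbl, rfl⟩ := List.mem_map.mp hxL
        have hxP : Sum.inl b ∈ M'.val.map Sum.inl ++ [Sum.inr M'] :=
          (hrot'.perm.mem_iff).mpr hxL'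
        rcases List.mem_append.mp hxP with hmem | hmem
        · obtain ⟨b', hb', he⟩ := List.mem_map.mp hmem
          rw [show b' = b from Sum.inl_injective he] at hb'
          exact SMAux.max_not_periodic M'.prop hb' (SMAux.cycle_length_pos hcyc)
            (SMAux.cycle_periodic hcyc hbl)
        · simp at hmem
    · rcases hL' with ⟨c', lc', hcyc', rfl⟩ | ⟨M', hrot'⟩
      · exfalso
        obtain ⟨b, hbl, rfl⟩ := List.mem_map.mp hxL'
        have hxP : Sum.inl b ∈ M.val.map Sum.inl ++ [Sum.inr M] :=
          (hrot.perm.mem_iff).mpr hxL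
        rcases List.mem_append.mp hxP with hmem | hmem
        · obtain ⟨b', hb', he⟩ := List.mem_map.mp hmem
          rw [show b' = b from Sum.inl_injective he] at hb'
          exact SMAux.max_not_periodic M.prop hb' (SMAux.cycle_length_pos hcyc')
            (SMAux.cycle_periodic hcyc' hbl)
        · simp at hmem
      · have hxP : x ∈ M.val.map Sum.inl ++ [Sum.inr M] := (hrot.perm.mem_iff).mpr hxL
        have hxP' : x ∈ M'.val.map Sum.inl ++ [Sum.inr M'] := (hrot'.perm.mem_iff).mpr hxL'
        have hMM : M = M' := by
          rcases List.mem_append.mp hxP with hmem | hmem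
          · obtain ⟨b, hb, rfl⟩ := List.mem_map.mp hmem
            rcases List.mem_append.mp hxP' with hmem' | hmem'
            · obtain ⟨b', hb', he⟩ := List.mem_map.mp hmem'
              rw [show b' = b from Sum.inl_injective he] at hb'
              exact Subtype.ext (SMAux.max_unique hinj hadj M.prop M'.prop hb hb')
            · replace hmem' := List.mem_singleton.mp hmem'
              cases hmem'
          · replace hmem := List.mem_singleton.mp hmem
            subst hmem
            rcases List.mem_append.mp hxP' with hmem' | hmem'
            · obtain ⟨b', hb', he⟩ := List.mem_map.mp hmem'
              cases he
            · replace hmem' := List.mem_singleton.mp hmem'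
              exact Sum.inr_injective hmem'
        rw [← hMM] at hrot'
        exact hrot.symm.trans hrot'
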